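/- arXiv:1011.3383 — 2 statements merged into one kernel-verified Lean document; each statement's English description precedes it below -/
import Mathlib

section
/- For every finite simple graph G on n vertices with minimum degree δ(G) ≥ 1, the domination number satisfies γ(G) ≤ n/2. -/
def IsDominating {V : Type*} (G : SimpleGraph V) (D : Set V) : Prop :=
  ∀ v : V, v ∉ D → ∃ u ∈ D, G.Adj u v

noncomputable def dominationNumber {V : Type*} [Fintype V] (G : SimpleGraph V) : ℕ :=
  sInf {k | ∃ D : Finset V, IsDominating G ↑D ∧ D.card = k}

theorem stmt_5 {V : Type*} [Fintype V] (G : SimpleGraph V)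
    [DecidableRel G.Adj] (hδ : 1 ≤ G.minDegree) :
    (dominationNumber G : ℝ) ≤ (Fintype.card V : ℝ) / 2 := by
  classical
  set S : Set ℕ := {k | ∃ D : Finset V, IsDominating G ↑D ∧ D.card = k} with hS
  have huniv : Fintype.card V ∈ S := by
    refine ⟨Finset.univ, ?_, Finset.card_univ⟩
    intro v hv
    exact absurd (by simp) hv
  have hSne : S.Nonempty := ⟨_, huniv⟩
  have hmem : dominationNumber G ∈ S := Nat.sInf_mem hSne
  obtain ⟨D, hD, hcard⟩ := hmem
  -- every vertex has a neighbor
  have hnbr : ∀ v : V, ∃ u, G.Adj u v := by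
    intro v
    have h1 : 1 ≤ G.degree v := le_trans hδ (G.minDegree_le_degree v)
    rw [← SimpleGraph.card_neighborFinset_eq_degree] at h1
    obtain ⟨u, hu⟩ := Finset.card_pos.mp h1
    exact ⟨u, (G.mem_neighborFinset v u).mp hu |>.symm⟩
  -- the complement of D is dominating
  have hcompl : IsDominating G ↑(Dᶜ : Finset V) := by
    intro v hv
    simp only [Finset.coe_compl, Set.mem_compl_iff, Finset.mem_coe, not_not] at hv
    by_contra hno
    push_neg at hno
    have hall : ∀ u, G.Adj u v → u ∈ D := by
      intro u hu
      by_contra h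
      exact hno u (by simpa using h) hu
    -- then D.erase v is dominating, contradicting minimality
    have herase : IsDominating G ↑(D.erase v) := by
      intro w hw
      simp only [Finset.coe_erase, Set.mem_diff, Finset.mem_coe, Set.mem_singleton_iff,
        not_and, not_not] at hw
      by_cases hwv : w = v
      · subst hwv
        obtain ⟨u, hu⟩ := hnbr w
        refine ⟨u, ?_, hu⟩
        simp only [Finset.coe_erase, Set.mem_diff, Finset.mem_coe, Set.mem_singleton_iff]
        exact ⟨hall u hu, fun h => G.loopless.irrefl w (h ▸ hu)⟩
      · have hwD : w ∉ D := fun h => hwv (hw h)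
        obtain ⟨u, huD, hu⟩ := hD w (by simpa using hwD)
        simp only [Finset.mem_coe] at huD
        refine ⟨u, ?_, hu⟩
        simp only [Finset.coe_erase, Set.mem_diff, Finset.mem_coe, Set.mem_singleton_iff]
        refine ⟨huD, fun h => ?_⟩
        subst h
        exact hwD (hall w hu.symm)
    have hle : dominationNumber G ≤ (D.erase v).card :=
      Nat.sInf_le ⟨D.erase v, herase, rfl⟩
    have hlt : (D.erase v).card < D.card := Finset.card_erase_lt_of_mem hv
    omega
  have hle2 : dominationNumber G ≤ (Dᶜ : Finset V).card :=
    Nat.sInf_le ⟨Dᶜ, hcompl, rfl⟩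
  have hcc : (Dᶜ : Finset V).card = Fintype.card V - D.card := Finset.card_compl D
  have hDle : D.card ≤ Fintype.card V := Finset.card_le_univ D
  have key : 2 * dominationNumber G ≤ Fintype.card V := by omega
  have : (2 * dominationNumber G : ℝ) ≤ (Fintype.card V : ℝ) := by
    exact_mod_cast key
  linarith
end

section
/- For every real x ≥ 7, the function f(x) = 1 - x·(1/(x+1))^{1+1/x} satisfies f(x) < x/(3x-1). -/
theorem stmt_10 (x : ℝ) (hx : 7 ≤ x) :
    1 - x * ((1 / (x + 1)) ^ ((1 : ℝ) + 1 / x)) < x / (3 * x - 1) := by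
  have hx0 : (0:ℝ) < x := by linarith
  have hx1 : (0:ℝ) < x + 1 := by linarith
  have h3 : (0:ℝ) < 3 * x - 1 := by linarith
  have h2 : (0:ℝ) < 2 * x - 1 := by linarith
  set p : ℝ := (1 : ℝ) + 1 / x with hp
  -- log(35/26) bounds
  have hL8 : Real.log 8 < 7 * Real.log (35/26) := by
    have h7 : (7:ℝ) * Real.log (35/26) = Real.log (((35:ℝ)/26)^(7:ℕ)) := by
      rw [Real.log_pow]; push_cast; ring
    rw [h7]
    apply Real.log_lt_log (by norm_num)
    norm_num
  have hL18 : (1:ℝ)/8 < Real.log (35/26) := by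
    have h8 : (8:ℝ) * Real.log (35/26) = Real.log (((35:ℝ)/26)^(8:ℕ)) := by
      rw [Real.log_pow]; push_cast; ring
    have he : Real.exp 1 < ((35:ℝ)/26)^(8:ℕ) := by
      have := Real.exp_one_lt_d9
      nlinarith [this]
    have h1 : (1:ℝ) < 8 * Real.log (35/26) := by
      rw [h8]
      calc (1:ℝ) = Real.log (Real.exp 1) := (Real.log_exp 1).symm
        _ < _ := Real.log_lt_log (Real.exp_pos 1) he
    linarith
  -- tangent line bound for log
  have hlogx1 : Real.log (x+1) ≤ Real.log 8 + (x+1)/8 - 1 := by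
    have h := Real.log_le_sub_one_of_pos (show (0:ℝ) < (x+1)/8 by linarith)
    have heq : Real.log ((x+1)/8) = Real.log (x+1) - Real.log 8 := by
      rw [Real.log_div (by linarith) (by norm_num)]
    linarith
  -- key inequality
  have hkey : Real.log (x+1) < x * Real.log (35/26) := by
    nlinarith [mul_nonneg (by linarith : (0:ℝ) ≤ x - 7)
      (by linarith : (0:ℝ) ≤ Real.log (35/26) - 1/8)]
  -- the power bound
  have hpow : (0:ℝ) < (x+1) ^ p := Real.rpow_pos_of_pos hx1 p
  have hmain : (x+1) ^ p < (35/26) * (x+1) := by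
    rw [Real.rpow_def_of_pos hx1]
    have hexp : Real.log (x+1) * p < Real.log ((35/26) * (x+1)) := by
      rw [Real.log_mul (by norm_num) (ne_of_gt hx1)]
      have hsplit : Real.log (x+1) * p = Real.log (x+1) + Real.log (x+1) / x := by
        rw [hp]; field_simp
      have hdiv : Real.log (x+1) / x < Real.log (35/26) :=
        (div_lt_iff₀ hx0).mpr (by linarith [hkey])
      linarith [hsplit, hdiv]
    calc Real.exp (Real.log (x+1) * p) < Real.exp (Real.log ((35/26) * (x+1))) :=
          Real.exp_lt_exp.mpr hexp
      _ = (35/26) * (x+1) := Real.exp_log (by positivity)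
  have hq : (35/26 : ℝ) * (x+1) ≤ x * (3*x-1) / (2*x-1) := by
    rw [le_div_iff₀ h2]
    nlinarith [mul_nonneg (by linarith : (0:ℝ) ≤ x - 7) (by linarith : (0:ℝ) ≤ 8*x - 5)]
  have hfinal : (x+1) ^ p < x * (3*x-1) / (2*x-1) := lt_of_lt_of_le hmain hq
  -- rewrite the goal
  have hrw : x * ((1 / (x + 1)) ^ p) = x / (x+1) ^ p := by
    rw [one_div, Real.inv_rpow hx1.le, div_eq_mul_inv]
  rw [hrw]
  have h5 : (2*x-1)/(3*x-1) < x / (x+1) ^ p := by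
    rw [div_lt_div_iff₀ h3 hpow]
    calc (2*x-1) * (x+1)^p < (2*x-1) * (x * (3*x-1) / (2*x-1)) :=
          mul_lt_mul_of_pos_left hfinal h2
      _ = x * (3*x-1) := by field_simp
  have heq2 : 1 - (2*x-1)/(3*x-1) = x/(3*x-1) := by
    rw [eq_div_iff h3.ne', sub_mul, div_mul_cancel₀ _ h3.ne']; ring
  linarith
end
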